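/- Let G be a finite simple graph, ι an involutive automorphism of G, and A a connected nonempty set of vertices such that A is not of the form {v, ι(v)} for any vertex v with ι(v) ≠ v. Then there exists a connected set of vertices B such that A ∪ ι(A) = B ∪ ι(B) and for every v ∈ B with ι(v) ≠ v, ι(v) ∉ B. -/

import Mathlib

open SimpleGraph Set

private lemma induce_connected_iff_walks {V : Type*} (G : SimpleGraph V) (s : Set V) :
    (G.induce s).Connected ↔ s.Nonempty ∧
      ∀ ⦃x⦄, x ∈ s → ∀ ⦃y⦄, y ∈ s → ∃ p : G.Walk x y, ∀ z ∈ p.support, z ∈ s := by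
  rw [connected_induce_iff, Subgraph.connected_iff_forall_exists_walk_subgraph]
  simp only [Subgraph.induce_verts, Subgraph.verts_top]
  constructor
  · rintro ⟨hne, h⟩
    refine ⟨hne, fun x hx y hy => ?_⟩
    obtain ⟨p, hp⟩ := h hx hy
    refine ⟨p, fun z hz => ?_⟩
    have := Subgraph.verts_mono hp
    rw [p.verts_toSubgraph] at this
    exact this hz
  · rintro ⟨hne, h⟩
    refine ⟨hne, fun {x y} hx hy => ?_⟩
    obtain ⟨p, hp⟩ := h hx hy
    exact ⟨p, p.toSubgraph_le_induce_support.trans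
      (Subgraph.induce_mono le_rfl (fun z hz => hp z hz))⟩

/-- If `C` is "adjacency-closed" inside `B \ {v}`, then any walk in `B` from a vertex
outside `C` to `v` can be replaced by one avoiding `C`. -/
private lemma avoid_aux {V : Type*} {G : SimpleGraph V} {B C : Set V} {v : V}
    (hvB : v ∈ B) (hvnC : v ∉ C)
    (hcl : ∀ ⦃a b : V⦄, G.Adj a b → b ∈ C → a ∈ B → a ≠ v → a ∈ C) :
    ∀ {u w : V} (q : G.Walk u w), w = v → (∀ z ∈ q.support, z ∈ B) → u ∉ C →
      ∃ r : G.Walk u v, ∀ z ∈ r.support, z ∈ B \ C := by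
  intro u w q
  induction q with
  | nil =>
    rintro rfl _ _
    exact ⟨Walk.nil, by simpa using ⟨hvB, hvnC⟩⟩
  | @cons a b w hadj q ihq =>
    intro hw hsup hu
    by_cases hav : a = v
    · refine ⟨Walk.nil.copy hav.symm rfl, ?_⟩
      intro z hz
      rw [Walk.support_copy] at hz
      simp only [Walk.support_nil, List.mem_singleton] at hz
      subst hz
      exact ⟨hvB, hvnC⟩
    · have haB : a ∈ B := hsup a (Walk.start_mem_support _)
      have hbC : b ∉ C := fun hb => hu (hcl hadj hb haB hav)
      obtain ⟨r, hr⟩ := ihq hw (fun z hz => hsup z (by simp [hz])) hbC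
      refine ⟨Walk.cons hadj r, ?_⟩
      intro z hz
      rw [Walk.support_cons, List.mem_cons] at hz
      rcases hz with rfl | hz
      · exact ⟨haB, hu⟩
      · exact hr z hz

private lemma key_lemma {V : Type*} [Fintype V] (G : SimpleGraph V) (ι : G ≃g G)
    (hinv : ∀ v, ι (ι v) = v) :
    ∀ (n : ℕ) (B : Set V), B.ncard ≤ n → (G.induce B).Connected →
      ∃ D : Set V, (G.induce D).Connected ∧ B ∪ (ι '' B) = D ∪ (ι '' D) ∧
        ∀ v ∈ D, ι v ≠ v → ι v ∉ D := by
  classical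
  have himg : ∀ (X : Set V) (z : V), z ∈ ι '' X ↔ ι z ∈ X := by
    intro X z
    constructor
    · rintro ⟨w, hw, rfl⟩; rwa [hinv]
    · intro h; exact ⟨ι z, h, hinv z⟩
  intro n
  induction n with
  | zero =>
    intro B hcard hconn
    exfalso
    have hne : B.Nonempty := by
      obtain ⟨⟨x, hx⟩⟩ := hconn.nonempty
      exact ⟨x, hx⟩
    have := (Set.ncard_pos B.toFinite).mpr hne
    omega
  | succ n ih =>
    intro B hcard hconn
    by_cases hgood : ∀ v ∈ B, ι v ≠ v → ι v ∉ B
    · exact ⟨B, hconn, rfl, hgood⟩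
    push_neg at hgood
    obtain ⟨v, hvB, hvne, hvιB⟩ := hgood
    -- the connected component of ι v in B \ {v}, described via walks
    set C : Set V := {w | ∃ p : G.Walk (ι v) w, ∀ z ∈ p.support, z ∈ B \ {v}} with hC
    have hCsub : C ⊆ B \ {v} := fun w hw => by
      obtain ⟨p, hp⟩ := hw
      exact hp w p.end_mem_support
    have hιvC : ι v ∈ C := ⟨Walk.nil, by simpa using ⟨hvιB, hvne⟩⟩
    have hvnC : v ∉ C := fun h => (hCsub h).2 rfl
    have hcl : ∀ ⦃a b : V⦄, G.Adj a b → b ∈ C → a ∈ B → a ≠ v → a ∈ C := by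
      intro a b hadj hbC haB hav
      obtain ⟨p, hp⟩ := hbC
      refine ⟨p.concat hadj.symm, ?_⟩
      intro z hz
      rw [Walk.support_concat, List.mem_append] at hz
      rcases hz with hz | hz
      · exact hp z hz
      · simp only [List.mem_singleton] at hz
        subst hz
        exact ⟨haB, hav⟩
    -- the replacement set
    set E : Set V := C ∪ ι '' ((B \ C) \ {v}) with hE
    have hιvE : ι v ∈ E := Or.inl hιvC
    -- every point of E is joined to ι v inside E
    have hBwalks := (induce_connected_iff_walks G B).mp hconn
    have hub : ∀ x ∈ E, ∃ p : G.Walk x (ι v), ∀ z ∈ p.support, z ∈ E := by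
      rintro x (hx | hx)
      · obtain ⟨p, hp⟩ := hx
        refine ⟨p.reverse, ?_⟩
        intro z hz
        rw [Walk.support_reverse, List.mem_reverse] at hz
        exact Or.inl ⟨p.takeUntil z hz, fun w hw => hp w (p.support_takeUntil_subset hz hw)⟩
      · obtain ⟨u, hu, rfl⟩ := hx
        obtain ⟨q, hq⟩ := hBwalks.2 hu.1.1 hvB
        obtain ⟨r, hr⟩ := avoid_aux hvB hvnC hcl q rfl hq hu.1.2
        refine ⟨r.map ι.toHom, ?_⟩
        intro z hz
        rw [Walk.support_map, List.mem_map] at hz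
        obtain ⟨w, hw, rfl⟩ := hz
        by_cases hwv : w = v
        · subst hwv; exact Or.inl hιvC
        · exact Or.inr ⟨w, ⟨hr w hw, hwv⟩, rfl⟩
    have hEconn : (G.induce E).Connected := by
      rw [induce_connected_iff_walks]
      refine ⟨⟨ι v, hιvE⟩, fun x hx y hy => ?_⟩
      obtain ⟨p, hp⟩ := hub x hx
      obtain ⟨q, hq⟩ := hub y hy
      refine ⟨p.append q.reverse, ?_⟩
      intro z hz
      rw [Walk.support_append, List.mem_append] at hz
      rcases hz with hz | hz
      · exact hp z hz
      · rw [Walk.support_reverse] at hz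
        exact hq z (List.mem_reverse.mp (List.mem_of_mem_tail hz))
    -- the union condition
    have hmemE : ∀ z, z ∈ E ↔ z ∈ C ∨ ι z ∈ (B \ C) \ {v} := fun z => by
      rw [hE, Set.mem_union, himg]
    have hBsubE : ∀ z ∈ B, z ∈ E ∨ ι z ∈ E := by
      intro z hzB
      by_cases hzC : z ∈ C
      · exact Or.inl ((hmemE z).mpr (Or.inl hzC))
      by_cases hzv : z = v
      · subst hzv
        exact Or.inr ((hmemE _).mpr (Or.inl hιvC))
      · exact Or.inr ((hmemE _).mpr (Or.inr (by rw [hinv]; exact ⟨⟨hzB, hzC⟩, hzv⟩)))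
    have hEsubU : ∀ z ∈ E, z ∈ B ∪ ι '' B := by
      intro z hz
      rcases (hmemE z).mp hz with hz | hz
      · exact Or.inl (hCsub hz).1
      · exact Or.inr ((himg B z).mpr hz.1.1)
    have hunion : B ∪ ι '' B = E ∪ ι '' E := by
      ext z
      constructor
      · intro h
        have hz' : z ∈ E ∨ ι z ∈ E := by
          rcases h with h | h
          · exact hBsubE z h
          · rcases hBsubE (ι z) ((himg B z).mp h) with h' | h'
            · exact Or.inr h'
            · rw [hinv] at h'
              exact Or.inl h'
        rcases hz' with h' | h'
        · exact Or.inl h'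
        · exact Or.inr ((himg E z).mpr h')
      · intro h
        rcases h with h | h
        · exact hEsubU z h
        · have h' : ι z ∈ E := (himg E z).mp h
          rcases hEsubU _ h' with h'' | h''
          · exact Or.inr ((himg B z).mpr h'')
          · have : ι (ι z) ∈ B := (himg B (ι z)).mp h''
            rw [hinv] at this
            exact Or.inl this
    -- cardinality decreases
    have hcardE : E.ncard ≤ n := by
      have h1 : E.ncard ≤ C.ncard + (ι '' ((B \ C) \ {v})).ncard := Set.ncard_union_le _ _
      have h3 : (B \ C) \ {v} = (B \ {v}) \ C := Set.diff_diff_comm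
      have h2 : (ι '' ((B \ C) \ {v})).ncard = ((B \ {v}) \ C).ncard := by
        rw [Set.ncard_image_of_injective _ ι.injective, h3]
      have h4 : ((B \ {v}) \ C).ncard + C.ncard = (B \ {v}).ncard :=
        Set.ncard_diff_add_ncard_of_subset hCsub (B \ {v}).toFinite
      have h5 : (B \ {v}).ncard < B.ncard :=
        Set.ncard_diff_singleton_lt_of_mem hvB B.toFinite
      omega
    obtain ⟨D, hDconn, hDeq, hDgood⟩ := ih E hcardE hEconn
    exact ⟨D, hDconn, hunion.trans hDeq, hDgood⟩

/-- given an involutive graph automorphism ι and a connected set A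
not of the form {v, ι v}, there is a connected set B with A ∪ ι(A) = B ∪ ι(B)
and ι(v) ∉ B for every non-fixed v ∈ B. -/
theorem stmt_5 {V : Type*} [Fintype V] (G : SimpleGraph V) (ι : G ≃g G)
    (hinv : ∀ v, ι (ι v) = v)
    (A : Set V) (hA : (G.induce A).Connected)
    (hshape : ∀ v : V, ι v ≠ v → A ≠ {v, ι v}) :
    ∃ B : Set V, (G.induce B).Connected ∧
      A ∪ (ι '' A) = B ∪ (ι '' B) ∧
      ∀ v ∈ B, ι v ≠ v → ι v ∉ B := by
  exact key_lemma G ι hinv A.ncard A le_rfl hA
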